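/- Let n ≥ 4 and set w = s_0 ∘ [2,n−1] ∘ [1,n−2] ∘ s_n on the affine root lattice of type D_n^{(1)}. Then: w(α_0) = α_0 + α_1 + 2α_2 + α_3; w(α_j) = α_{j+2} for 1 ≤ j ≤ n−3; w(α_{n−1}) = α_1; w(α_{n−2}) = α_0 + α_2 + ⋯ + α_{n−2} + α_n; and w(α_n) = −θ − 2α_0, where θ = α_1 + α_{n−1} + α_n + 2(α_2 + ⋯ + α_{n−2}). -/

import Mathlib

noncomputable section

open Finset

/-- The basis vector `α_k` of the affine root lattice `V = ℤ^{n+1}` (indices `0 ≤ k ≤ n`). -/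
def al (n k : ℕ) : Fin (n + 1) → ℤ := fun m => if (m : ℕ) = k then 1 else 0

/-- The affine Cartan matrix of type `D_n^{(1)}`: `a_{jj} = 2`; `a_{jk} = a_{kj} = −1` when
the nodes `j, k` are adjacent in the affine Dynkin diagram of `D_n^{(1)}`
(adjacent pairs `{0,2}`, `{1,2}`, `{j,j+1}` for `2 ≤ j ≤ n−2`, and `{n−2,n}`);
`a_{jk} = 0` otherwise. -/
def aD (n j k : ℕ) : ℤ :=
  if j = k then 2
  else if (j = 0 ∧ k = 2) ∨ (j = 2 ∧ k = 0) ∨ (j = 1 ∧ k = 2) ∨ (j = 2 ∧ k = 1)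
      ∨ (2 ≤ j ∧ j ≤ n - 2 ∧ k = j + 1) ∨ (2 ≤ k ∧ k ≤ n - 2 ∧ j = k + 1)
      ∨ (j = n - 2 ∧ k = n) ∨ (j = n ∧ k = n - 2) then -1
  else 0

/-- The simple reflection `s_i` on the affine root lattice of type `D_n^{(1)}`:
the ℤ-linear map determined by `s_i(α_j) = α_j − a_{ji} α_i`. -/
def sD (n i : ℕ) (x : Fin (n + 1) → ℤ) : Fin (n + 1) → ℤ :=
  fun m => x m - (∑ j : Fin (n + 1), aD n (j : ℕ) i * x j) * (if (m : ℕ) = i then 1 else 0)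

/-- The block `[k,l] = s_k ∘ s_{k+1} ∘ ⋯ ∘ s_l` (rightmost factor applied first). -/
def blkD (n k l : ℕ) : (Fin (n + 1) → ℤ) → (Fin (n + 1) → ℤ) :=
  (List.range' k (l + 1 - k)).foldr (fun j f => sD n j ∘ f) id

namespace AuxD

lemma aD_diag (n j : ℕ) : aD n j j = 2 := if_pos rfl

lemma aD_neg1 {n j k : ℕ} (hne : ¬ j = k)
    (h : (j = 0 ∧ k = 2) ∨ (j = 2 ∧ k = 0) ∨ (j = 1 ∧ k = 2) ∨ (j = 2 ∧ k = 1)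
      ∨ (2 ≤ j ∧ j ≤ n - 2 ∧ k = j + 1) ∨ (2 ≤ k ∧ k ≤ n - 2 ∧ j = k + 1)
      ∨ (j = n - 2 ∧ k = n) ∨ (j = n ∧ k = n - 2)) : aD n j k = -1 := by
  unfold aD; rw [if_neg hne, if_pos h]

lemma aD_zero {n j k : ℕ} (hne : ¬ j = k)
    (h : ¬((j = 0 ∧ k = 2) ∨ (j = 2 ∧ k = 0) ∨ (j = 1 ∧ k = 2) ∨ (j = 2 ∧ k = 1)
      ∨ (2 ≤ j ∧ j ≤ n - 2 ∧ k = j + 1) ∨ (2 ≤ k ∧ k ≤ n - 2 ∧ j = k + 1)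
      ∨ (j = n - 2 ∧ k = n) ∨ (j = n ∧ k = n - 2))) : aD n j k = 0 := by
  unfold aD; rw [if_neg hne, if_neg h]

/-- The coefficient `⟨v, a_{·i}⟩`. -/
def cf (n i : ℕ) (v : Fin (n + 1) → ℤ) : ℤ := ∑ j : Fin (n + 1), aD n (j : ℕ) i * v j

variable {n : ℕ}

lemma cf_al {k : ℕ} (hk : k ≤ n) (i : ℕ) : cf n i (al n k) = aD n k i := by
  unfold cf al
  rw [Finset.sum_eq_single_of_mem (⟨k, by omega⟩ : Fin (n + 1)) (Finset.mem_univ _)]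
  · simp
  · intro b _ hb
    have hb' : (b : ℕ) ≠ k := fun h => hb (Fin.ext h)
    simp [hb']

lemma cf_add (i : ℕ) (v w : Fin (n + 1) → ℤ) :
    cf n i (v + w) = cf n i v + cf n i w := by
  simp [cf, mul_add, Finset.sum_add_distrib]

lemma cf_smul (i : ℕ) (c : ℤ) (v : Fin (n + 1) → ℤ) :
    cf n i (c • v) = c * cf n i v := by
  simp only [cf, Finset.mul_sum, Pi.smul_apply, smul_eq_mul]
  exact Finset.sum_congr rfl fun j _ => by ring

lemma cf_neg (i : ℕ) (v : Fin (n + 1) → ℤ) : cf n i (-v) = -cf n i v := by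
  simp [cf, Finset.sum_neg_distrib]

lemma cf_sum (i : ℕ) (s : Finset ℕ) (f : ℕ → Fin (n + 1) → ℤ) :
    cf n i (∑ t ∈ s, f t) = ∑ t ∈ s, cf n i (f t) := by
  unfold cf
  simp only [Finset.sum_apply, Finset.mul_sum]
  exact Finset.sum_comm

lemma cf_sum_al {i a b : ℕ} (hb : b ≤ n) :
    cf n i (∑ t ∈ Icc a b, al n t) = ∑ t ∈ Icc a b, aD n t i := by
  rw [cf_sum]
  exact Finset.sum_congr rfl fun t ht => cf_al (le_trans (Finset.mem_Icc.mp ht).2 hb) i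

lemma sD_eq (i : ℕ) (v : Fin (n + 1) → ℤ) : sD n i v = v - cf n i v • al n i := by
  funext m; rfl

lemma sD_app {i : ℕ} {v w : Fin (n + 1) → ℤ} {c : ℤ}
    (hc : cf n i v = c) (hw : v - c • al n i = w) : sD n i v = w := by
  rw [sD_eq, hc, hw]

lemma sD_fix {i : ℕ} {v : Fin (n + 1) → ℤ} (h : cf n i v = 0) : sD n i v = v := by
  rw [sD_eq, h, zero_smul, sub_zero]

lemma sD_neg (i : ℕ) (v : Fin (n + 1) → ℤ) : sD n i (-v) = -sD n i v := by
  rw [sD_eq, sD_eq, cf_neg]; module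

/- list foldr helpers -/

lemma foldr_comp (L : List ℕ) (g : (Fin (n + 1) → ℤ) → (Fin (n + 1) → ℤ)) :
    L.foldr (fun j f => sD n j ∘ f) g = (L.foldr (fun j f => sD n j ∘ f) id) ∘ g := by
  induction L with
  | nil => rfl
  | cons a L ih => simp only [List.foldr_cons, ih]; rfl

lemma blk_nil {k l : ℕ} (h : l + 1 ≤ k) : blkD n k l = id := by
  unfold blkD
  rw [show l + 1 - k = 0 by omega]
  rfl

lemma blk_cons {k l : ℕ} (h : k ≤ l) : blkD n k l = sD n k ∘ blkD n (k + 1) l := by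
  unfold blkD
  rw [show l + 1 - k = (l + 1 - (k + 1)) + 1 by omega, List.range'_succ]
  rfl

lemma blk_sgl (k : ℕ) : blkD n k k = sD n k := by
  rw [blk_cons (le_refl k), blk_nil (le_refl (k + 1))]
  rfl

lemma blk_snoc {k l : ℕ} (h : k ≤ l + 1) : blkD n k (l + 1) = blkD n k l ∘ sD n (l + 1) := by
  unfold blkD
  rw [show l + 1 + 1 - k = (l + 1 - k) + 1 by omega, List.range'_concat,
    List.foldr_append, foldr_comp]
  simp only [List.foldr_cons, List.foldr_nil]
  rw [show k + 1 * (l + 1 - k) = l + 1 by omega]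
  rfl

lemma blk_split {k m l : ℕ} (h1 : k ≤ m + 1) (h2 : m ≤ l) :
    blkD n k l = blkD n k m ∘ blkD n (m + 1) l := by
  unfold blkD
  have h3 : List.range' k (m + 1 - k) ++ List.range' (m + 1) (l + 1 - (m + 1))
      = List.range' k (l + 1 - k) := by
    have := List.range'_append_1 (s := k) (m := m + 1 - k) (n := l + 1 - (m + 1))
    rw [show k + (m + 1 - k) = m + 1 by omega] at this
    rw [this]
    congr 1
    omega
  rw [← h3, List.foldr_append, foldr_comp]

lemma foldr_fix (L : List ℕ) (v : Fin (n + 1) → ℤ) (h : ∀ i ∈ L, sD n i v = v) :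
    L.foldr (fun j f => sD n j ∘ f) id v = v := by
  induction L with
  | nil => rfl
  | cons a L ih =>
    simp only [List.foldr_cons, Function.comp_apply]
    rw [ih (fun i hi => h i (List.mem_cons_of_mem a hi)), h a List.mem_cons_self]

lemma blk_fix {k l : ℕ} {v : Fin (n + 1) → ℤ}
    (h : ∀ i, k ≤ i → i ≤ l → cf n i v = 0) : blkD n k l v = v := by
  unfold blkD
  apply foldr_fix
  intro i hi
  rw [List.mem_range'_1] at hi
  exact sD_fix (h i hi.1 (by omega))

lemma blk_neg (k l : ℕ) (v : Fin (n + 1) → ℤ) : blkD n k l (-v) = -blkD n k l v := by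
  unfold blkD
  generalize List.range' k (l + 1 - k) = L
  induction L with
  | nil => rfl
  | cons a L ih =>
    simp only [List.foldr_cons, Function.comp_apply, ih, sD_neg]

/- sum helpers -/

lemma sum_aD_single {i a b t0 : ℕ} (ht : t0 ∈ Icc a b)
    (h : ∀ t, a ≤ t → t ≤ b → t ≠ t0 → aD n t i = 0) :
    ∑ t ∈ Icc a b, aD n t i = aD n t0 i :=
  Finset.sum_eq_single_of_mem t0 ht
    (fun t hts hne => h t (Finset.mem_Icc.mp hts).1 (Finset.mem_Icc.mp hts).2 hne)

lemma sum_bot {M : Type*} [AddCommMonoid M] {a b : ℕ} (h : a ≤ b) (f : ℕ → M) :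
    ∑ t ∈ Icc a b, f t = f a + ∑ t ∈ Icc (a + 1) b, f t := by
  rw [Finset.Icc_eq_cons_Ioc h, Finset.sum_cons, ← Finset.Icc_add_one_left_eq_Ioc]

end AuxD
namespace AuxD

variable {n : ℕ}

/- accumulation lemma A : s_k (α_{n-1} + Σ_{k+1..n-2} α) = α_{n-1} + Σ_{k..n-2} α -/
lemma accA (hn : 4 ≤ n) {k : ℕ} (hk1 : 1 ≤ k) (hk2 : k ≤ n - 2) :
    sD n k (al n (n - 1) + ∑ t ∈ Icc (k + 1) (n - 2), al n t)
      = al n (n - 1) + ∑ t ∈ Icc k (n - 2), al n t := by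
  apply sD_app (c := -1)
  · rw [cf_add, cf_al (by omega), cf_sum_al (by omega)]
    rcases eq_or_lt_of_le hk2 with he | hlt
    · rw [he, Finset.Icc_eq_empty (by omega), Finset.sum_empty,
        aD_neg1 (by omega) (by omega), add_zero]
    · rw [aD_zero (by omega) (by omega),
        sum_aD_single (Finset.mem_Icc.mpr ⟨le_refl _, by omega⟩)
          (fun t h1 h2 hne => aD_zero (by omega) (by omega)),
        aD_neg1 (by omega) (by omega)]
      norm_num
  · rw [sum_bot hk2 (al n)]
    module

lemma blkA (hn : 4 ≤ n) : ∀ d k, 1 ≤ k → k + d = n - 2 →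
    blkD n k (n - 2) (al n (n - 1)) = al n (n - 1) + ∑ t ∈ Icc k (n - 2), al n t := by
  intro d
  induction d with
  | zero =>
    intro k hk1 hk
    rw [show k = n - 2 by omega, blk_sgl]
    have h := accA hn (n := n) (k := n - 2) (by omega) (le_refl _)
    rw [Finset.Icc_eq_empty (a := n - 2 + 1) (by omega), Finset.sum_empty, add_zero] at h
    exact h
  | succ d ih =>
    intro k hk1 hk
    rw [blk_cons (by omega)]
    simp only [Function.comp_apply]
    rw [ih (k + 1) (by omega) (by omega)]
    exact accA hn hk1 (by omega)

/- accumulation lemma B : s_k (α_n + Σ_{k+1..n-2} α) = α_n + Σ_{k..n-2} α -/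
lemma accB (hn : 4 ≤ n) {k : ℕ} (hk1 : 1 ≤ k) (hk2 : k ≤ n - 2) :
    sD n k (al n n + ∑ t ∈ Icc (k + 1) (n - 2), al n t)
      = al n n + ∑ t ∈ Icc k (n - 2), al n t := by
  apply sD_app (c := -1)
  · rw [cf_add, cf_al (le_refl _), cf_sum_al (by omega)]
    rcases eq_or_lt_of_le hk2 with he | hlt
    · rw [he, Finset.Icc_eq_empty (by omega), Finset.sum_empty,
        aD_neg1 (by omega) (by omega), add_zero]
    · rw [aD_zero (by omega) (by omega),
        sum_aD_single (Finset.mem_Icc.mpr ⟨le_refl _, by omega⟩)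
          (fun t h1 h2 hne => aD_zero (by omega) (by omega)),
        aD_neg1 (by omega) (by omega)]
      norm_num
  · rw [sum_bot hk2 (al n)]
    module

lemma blkB (hn : 4 ≤ n) : ∀ d k, 1 ≤ k → k + d = n - 2 →
    blkD n k (n - 2) (al n n) = al n n + ∑ t ∈ Icc k (n - 2), al n t := by
  intro d
  induction d with
  | zero =>
    intro k hk1 hk
    rw [show k = n - 2 by omega, blk_sgl]
    have h := accB hn (n := n) (k := n - 2) (by omega) (le_refl _)
    rw [Finset.Icc_eq_empty (a := n - 2 + 1) (by omega), Finset.sum_empty, add_zero] at h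
    exact h
  | succ d ih =>
    intro k hk1 hk
    rw [blk_cons (by omega)]
    simp only [Function.comp_apply]
    rw [ih (k + 1) (by omega) (by omega)]
    exact accB hn hk1 (by omega)

end AuxD
namespace AuxD

variable {n : ℕ}

/-- Intermediate vector in the doubling computation. -/
def Fv (n k : ℕ) : Fin (n + 1) → ℤ :=
  al n 1 + (∑ t ∈ Icc 2 (k - 1), al n t) + (2 : ℤ) • (∑ t ∈ Icc k (n - 2), al n t)
    + al n (n - 1) + al n n

/- s_k (Fv (k+1)) = Fv k for 2 ≤ k ≤ n-2 -/
lemma accF (hn : 4 ≤ n) {k : ℕ} (hk1 : 2 ≤ k) (hk2 : k ≤ n - 2) :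
    sD n k (Fv n (k + 1)) = Fv n k := by
  unfold Fv
  simp only [Nat.add_sub_cancel]
  apply sD_app (c := -1)
  · simp only [cf_add, cf_smul]
    rw [cf_al (n := n) (k := 1) (by omega), cf_al (n := n) (k := n - 1) (by omega),
      cf_al (n := n) (k := n) (by omega), cf_sum_al (by omega), cf_sum_al (by omega)]
    have h1 : aD n 1 k + ∑ t ∈ Icc 2 k, aD n t k = 1 := by
      rcases eq_or_lt_of_le hk1 with he | hlt
      · rw [← he, Finset.Icc_self, Finset.sum_singleton, aD_diag,
          aD_neg1 (by omega) (by omega)]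
        norm_num
      · obtain ⟨m, rfl⟩ : ∃ m, k = m + 1 := ⟨k - 1, by omega⟩
        rw [aD_zero (by omega) (by omega), Finset.sum_Icc_succ_top (by omega),
          sum_aD_single (Finset.mem_Icc.mpr ⟨by omega, le_refl m⟩)
            (fun t h1 h2 hne => aD_zero (by omega) (by omega)),
          aD_neg1 (by omega) (by omega), aD_diag]
        norm_num
    have h2 : 2 * (∑ t ∈ Icc (k + 1) (n - 2), aD n t k) + aD n (n - 1) k + aD n n k = -2 := by
      rcases eq_or_lt_of_le hk2 with he | hlt
      · rw [he, Finset.Icc_eq_empty (by omega), Finset.sum_empty,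
          aD_neg1 (by omega) (by omega), aD_neg1 (by omega) (by omega)]
        norm_num
      · rw [aD_zero (by omega) (by omega), aD_zero (by omega) (by omega),
          sum_aD_single (Finset.mem_Icc.mpr ⟨le_refl _, by omega⟩)
            (fun t h1 h2 hne => aD_zero (by omega) (by omega)),
          aD_neg1 (by omega) (by omega)]
        norm_num
    linarith [h1, h2]
  · obtain ⟨m, rfl⟩ : ∃ m, k = m + 1 := ⟨k - 1, by omega⟩
    simp only [Nat.add_sub_cancel]
    rw [Finset.sum_Icc_succ_top (show 2 ≤ m + 1 by omega) (al n),
      sum_bot (show m + 1 ≤ n - 2 from hk2) (al n)]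
    module

lemma blkF (hn : 4 ≤ n) : ∀ d k, 2 ≤ k → k + d = n - 2 →
    blkD n k (n - 2) (Fv n (n - 1)) = Fv n k := by
  intro d
  induction d with
  | zero =>
    intro k hk1 hk
    rw [show k = n - 2 by omega, blk_sgl, show n - 1 = n - 2 + 1 by omega]
    exact accF hn (by omega) (le_refl _)
  | succ d ih =>
    intro k hk1 hk
    rw [blk_cons (by omega)]
    simp only [Function.comp_apply]
    rw [ih (k + 1) (by omega) (by omega)]
    exact accF hn hk1 (by omega)

/- deaccumulation : [2, m+1] (Σ_{1..m} α + α_{m+1}) = α_1 -/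
lemma blkR (hn : 4 ≤ n) : ∀ m, 1 ≤ m → m ≤ n - 2 →
    blkD n 2 (m + 1) ((∑ t ∈ Icc 1 m, al n t) + al n (m + 1)) = al n 1 := by
  intro m
  induction m with
  | zero => omega
  | succ m ih =>
    intro h1 h2
    rcases Nat.eq_or_lt_of_le h1 with he | hlt
    · -- m + 1 = 1, i.e. m = 0
      rw [show m = 0 by omega]
      rw [blk_sgl, Finset.Icc_self, Finset.sum_singleton]
      apply sD_app (c := 1)
      · rw [cf_add, cf_al (by omega), cf_al (by omega), aD_diag,
          aD_neg1 (by omega) (by omega)]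
        norm_num
      · module
    · -- 1 ≤ m
      rw [blk_snoc (by omega)]
      simp only [Function.comp_apply]
      have hs : sD n (m + 1 + 1) ((∑ t ∈ Icc 1 (m + 1), al n t) + al n (m + 1 + 1))
          = (∑ t ∈ Icc 1 m, al n t) + al n (m + 1) := by
        apply sD_app (c := 1)
        · rw [cf_add, cf_al (by omega), cf_sum_al (by omega), aD_diag,
            sum_aD_single (Finset.mem_Icc.mpr ⟨by omega, le_refl _⟩)
              (fun t ht1 ht2 hne => aD_zero (by omega) (by omega)),
            aD_neg1 (by omega) (by omega)]
          norm_num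
        · rw [Finset.sum_Icc_succ_top (show 1 ≤ m + 1 by omega) (al n)]
          module
      rw [hs]
      exact ih (by omega) (by omega)

/- shift lemma : [k,l] (α_m) = α_{m+1} for 1 ≤ k ≤ m, m+1 ≤ l ≤ n-1 -/
lemma blkShift (hn : 4 ≤ n) {k m l : ℕ} (hk : 1 ≤ k) (hkm : k ≤ m) (hml : m + 1 ≤ l)
    (hl : l ≤ n - 1) : blkD n k l (al n m) = al n (m + 1) := by
  rw [blk_split (show k ≤ m + 1 by omega) (show m ≤ l by omega)]
  simp only [Function.comp_apply]
  rw [blk_cons (show m + 1 ≤ l from hml)]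
  simp only [Function.comp_apply]
  have hfix : blkD n (m + 1 + 1) l (al n m) = al n m :=
    blk_fix (fun i hi1 hi2 => by
      rw [cf_al (by omega)]
      exact aD_zero (by omega) (by omega))
  rw [hfix]
  have hs1 : sD n (m + 1) (al n m) = al n m + al n (m + 1) := by
    apply sD_app (c := -1)
    · rw [cf_al (by omega)]
      exact aD_neg1 (by omega) (by omega)
    · module
  rw [hs1]
  obtain ⟨p, rfl⟩ : ∃ p, m = p + 1 := ⟨m - 1, by omega⟩
  rw [blk_snoc (show k ≤ p + 1 by omega)]
  simp only [Function.comp_apply]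
  have hs2 : sD n (p + 1) (al n (p + 1) + al n (p + 1 + 1)) = al n (p + 1 + 1) := by
    apply sD_app (c := 1)
    · rw [cf_add, cf_al (by omega), cf_al (by omega), aD_diag,
        aD_neg1 (by omega) (by omega)]
      norm_num
    · module
  rw [hs2]
  exact blk_fix (fun i hi1 hi2 => by
    rw [cf_al (n := n) (k := p + 1 + 1) (by omega)]
    exact aD_zero (by omega) (by omega))

end AuxD

open AuxD

/-- Action of `w = s₀ ∘ [2,n−1] ∘ [1,n−2] ∘ sₙ` on the simple roots of type `D_n^{(1)}`. -/
theorem statement9 (n : ℕ) (hn : 4 ≤ n) :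
    (sD n 0 ∘ blkD n 2 (n - 1) ∘ blkD n 1 (n - 2) ∘ sD n n) (al n 0)
        = al n 0 + al n 1 + (2 : ℤ) • al n 2 + al n 3
    ∧ (∀ j, 1 ≤ j → j ≤ n - 3 →
        (sD n 0 ∘ blkD n 2 (n - 1) ∘ blkD n 1 (n - 2) ∘ sD n n) (al n j) = al n (j + 2))
    ∧ (sD n 0 ∘ blkD n 2 (n - 1) ∘ blkD n 1 (n - 2) ∘ sD n n) (al n (n - 1)) = al n 1
    ∧ (sD n 0 ∘ blkD n 2 (n - 1) ∘ blkD n 1 (n - 2) ∘ sD n n) (al n (n - 2))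
        = al n 0 + (∑ j ∈ Icc 2 (n - 2), al n j) + al n n
    ∧ (sD n 0 ∘ blkD n 2 (n - 1) ∘ blkD n 1 (n - 2) ∘ sD n n) (al n n)
        = -(al n 1 + al n (n - 1) + al n n + (2 : ℤ) • ∑ j ∈ Icc 2 (n - 2), al n j)
          - (2 : ℤ) • al n 0 := by
  refine ⟨?_, ?_, ?_, ?_, ?_⟩
  · -- α₀
    simp only [Function.comp_apply]
    have e1 : sD n n (al n 0) = al n 0 :=
      sD_fix (by rw [cf_al (by omega)]; exact aD_zero (by omega) (by omega))
    have e2 : blkD n 1 (n - 2) (al n 0) = al n 0 + al n 2 + al n 1 := by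
      rw [blk_cons (show (1 : ℕ) ≤ n - 2 by omega), blk_cons (show (2 : ℕ) ≤ n - 2 by omega)]
      simp only [Function.comp_apply]
      have hfix : blkD n 3 (n - 2) (al n 0) = al n 0 :=
        blk_fix (fun i hi1 hi2 => by
          rw [cf_al (by omega)]; exact aD_zero (by omega) (by omega))
      rw [hfix]
      have h2 : sD n 2 (al n 0) = al n 0 + al n 2 := by
        apply sD_app (c := -1)
        · rw [cf_al (by omega)]; exact aD_neg1 (by omega) (by omega)
        · module
      rw [h2]
      apply sD_app (c := -1)
      · rw [cf_add, cf_al (by omega), cf_al (by omega),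
          aD_zero (j := 0) (k := 1) (by omega) (by omega),
          aD_neg1 (j := 2) (k := 1) (by omega) (by omega)]
        norm_num
      · module
    have e3 : blkD n 2 (n - 1) (al n 0 + al n 2 + al n 1)
        = al n 0 + al n 2 + al n 1 + al n 3 + al n 2 := by
      rw [blk_cons (show (2 : ℕ) ≤ n - 1 by omega), blk_cons (show (3 : ℕ) ≤ n - 1 by omega)]
      simp only [Function.comp_apply]
      have hfix : blkD n 4 (n - 1) (al n 0 + al n 2 + al n 1) = al n 0 + al n 2 + al n 1 :=
        blk_fix (fun i hi1 hi2 => by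
          simp only [cf_add]
          rw [cf_al (k := 0) (by omega), cf_al (k := 2) (by omega), cf_al (k := 1) (by omega),
            aD_zero (j := 0) (k := i) (by omega) (by omega),
            aD_zero (j := 2) (k := i) (by omega) (by omega),
            aD_zero (j := 1) (k := i) (by omega) (by omega)]
          norm_num)
      rw [hfix]
      have h3 : sD n 3 (al n 0 + al n 2 + al n 1) = al n 0 + al n 2 + al n 1 + al n 3 := by
        apply sD_app (c := -1)
        · simp only [cf_add]
          rw [cf_al (k := 0) (by omega), cf_al (k := 2) (by omega), cf_al (k := 1) (by omega),
            aD_zero (j := 0) (k := 3) (by omega) (by omega),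
            aD_neg1 (j := 2) (k := 3) (by omega) (by omega),
            aD_zero (j := 1) (k := 3) (by omega) (by omega)]
          norm_num
        · module
      rw [h3]
      apply sD_app (c := -1)
      · simp only [cf_add]
        rw [cf_al (k := 0) (by omega), cf_al (k := 2) (by omega), cf_al (k := 1) (by omega),
          cf_al (k := 3) (by omega),
          aD_neg1 (j := 0) (k := 2) (by omega) (by omega), aD_diag,
          aD_neg1 (j := 1) (k := 2) (by omega) (by omega),
          aD_neg1 (j := 3) (k := 2) (by omega) (by omega)]
        norm_num
      · module
    rw [e1, e2, e3]
    have hc : cf n 0 (al n 0 + al n 2 + al n 1 + al n 3 + al n 2) = 0 := by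
      simp only [cf_add]
      rw [cf_al (k := 0) (by omega), cf_al (k := 2) (by omega), cf_al (k := 1) (by omega),
        cf_al (k := 3) (by omega), aD_diag,
        aD_neg1 (j := 2) (k := 0) (by omega) (by omega),
        aD_zero (j := 1) (k := 0) (by omega) (by omega),
        aD_zero (j := 3) (k := 0) (by omega) (by omega)]
      norm_num
    rw [sD_fix hc]
    module
  · -- αⱼ, 1 ≤ j ≤ n-3
    intro j hj1 hj2
    simp only [Function.comp_apply]
    have e1 : sD n n (al n j) = al n j :=
      sD_fix (by rw [cf_al (by omega)]; exact aD_zero (by omega) (by omega))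
    rw [e1, blkShift hn (k := 1) (m := j) (l := n - 2) (by omega) (by omega) (by omega) (by omega),
      blkShift hn (k := 2) (m := j + 1) (l := n - 1) (by omega) (by omega) (by omega) (by omega),
      show j + 1 + 1 = j + 2 by omega]
    exact sD_fix (by rw [cf_al (by omega)]; exact aD_zero (by omega) (by omega))
  · -- α_{n-1}
    simp only [Function.comp_apply]
    have e1 : sD n n (al n (n - 1)) = al n (n - 1) :=
      sD_fix (by rw [cf_al (by omega)]; exact aD_zero (by omega) (by omega))
    rw [e1, blkA hn (n - 3) 1 (by omega) (by omega),
      show n - 1 = n - 2 + 1 by omega,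
      add_comm (al n (n - 2 + 1)) (∑ t ∈ Icc 1 (n - 2), al n t),
      blkR hn (n - 2) (by omega) (le_refl _)]
    exact sD_fix (by rw [cf_al (by omega)]; exact aD_zero (by omega) (by omega))
  · -- α_{n-2}
    simp only [Function.comp_apply]
    have e1 : sD n n (al n (n - 2)) = al n (n - 2) + al n n := by
      apply sD_app (c := -1)
      · rw [cf_al (by omega)]; exact aD_neg1 (by omega) (by omega)
      · module
    have e2 : blkD n 1 (n - 2) (al n (n - 2) + al n n) = al n n := by
      obtain ⟨m, hm⟩ : ∃ m, n - 2 = m + 1 := ⟨n - 3, by omega⟩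
      rw [hm, blk_snoc (by omega)]
      simp only [Function.comp_apply]
      have hs : sD n (m + 1) (al n (m + 1) + al n n) = al n n := by
        apply sD_app (c := 1)
        · rw [cf_add, cf_al (by omega), cf_al (le_refl _), aD_diag,
            aD_neg1 (j := n) (k := m + 1) (by omega) (by omega)]
          norm_num
        · module
      rw [hs]
      exact blk_fix (fun i hi1 hi2 => by
        rw [cf_al (n := n) (k := n) (le_refl _)]
        exact aD_zero (by omega) (by omega))
    have e3 : blkD n 2 (n - 1) (al n n) = al n n + ∑ t ∈ Icc 2 (n - 2), al n t := by
      obtain ⟨m, hm⟩ : ∃ m, n - 1 = m + 1 := ⟨n - 2, by omega⟩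
      rw [hm, blk_snoc (by omega)]
      simp only [Function.comp_apply]
      have hs : sD n (m + 1) (al n n) = al n n :=
        sD_fix (by rw [cf_al (le_refl _)]; exact aD_zero (by omega) (by omega))
      rw [hs, show m = n - 2 by omega]
      exact blkB hn (n - 4) 2 (by omega) (by omega)
    rw [e1, e2, e3]
    apply sD_app (c := -1)
    · rw [cf_add, cf_al (le_refl _), cf_sum_al (by omega),
        aD_zero (j := n) (k := 0) (by omega) (by omega),
        sum_aD_single (Finset.mem_Icc.mpr ⟨le_refl 2, by omega⟩)
          (fun t h1 h2 hne => aD_zero (by omega) (by omega)),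
        aD_neg1 (j := 2) (k := 0) (by omega) (by omega)]
      norm_num
    · module
  · -- α_n
    simp only [Function.comp_apply]
    have e1 : sD n n (al n n) = -al n n := by
      apply sD_app (c := 2)
      · rw [cf_al (le_refl _)]; exact aD_diag n n
      · module
    rw [e1, blk_neg, blk_neg, blkB hn (n - 3) 1 (by omega) (by omega)]
    have e3 : blkD n 2 (n - 1) (al n n + ∑ t ∈ Icc 1 (n - 2), al n t) = Fv n 2 := by
      obtain ⟨m, hm⟩ : ∃ m, n - 1 = m + 1 := ⟨n - 2, by omega⟩
      rw [hm, blk_snoc (by omega)]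
      simp only [Function.comp_apply]
      have hs : sD n (m + 1) (al n n + ∑ t ∈ Icc 1 (n - 2), al n t)
          = al n n + (∑ t ∈ Icc 1 (n - 2), al n t) + al n (m + 1) := by
        apply sD_app (c := -1)
        · rw [cf_add, cf_al (le_refl _), cf_sum_al (by omega),
            aD_zero (j := n) (k := m + 1) (by omega) (by omega),
            sum_aD_single (t0 := n - 2) (Finset.mem_Icc.mpr ⟨by omega, le_refl _⟩)
              (fun t h1 h2 hne => aD_zero (by omega) (by omega)),
            aD_neg1 (j := n - 2) (k := m + 1) (by omega) (by omega)]
          norm_num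
        · module
      rw [hs, show m = n - 2 by omega]
      have hv : al n n + (∑ t ∈ Icc 1 (n - 2), al n t) + al n (n - 2 + 1) = Fv n (n - 1) := by
        unfold Fv
        rw [show n - 1 - 1 = n - 2 by omega,
          Finset.Icc_eq_empty (a := n - 1) (b := n - 2) (by omega), Finset.sum_empty,
          show n - 2 + 1 = n - 1 by omega,
          sum_bot (show 1 ≤ n - 2 by omega) (al n)]
        module
      rw [hv]
      exact blkF hn (n - 4) 2 (by omega) (by omega)
    rw [e3]
    have hFv : Fv n 2 = al n 1 + (2 : ℤ) • (∑ t ∈ Icc 2 (n - 2), al n t)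
        + al n (n - 1) + al n n := by
      unfold Fv
      rw [show (2 : ℕ) - 1 = 1 by norm_num,
        Finset.Icc_eq_empty (a := 2) (b := 1) (by omega), Finset.sum_empty]
      module
    rw [hFv]
    apply sD_app (c := 2)
    · rw [cf_neg]
      simp only [cf_add, cf_smul]
      rw [cf_al (k := 1) (by omega), cf_al (k := n - 1) (by omega), cf_al (k := n) (le_refl _),
        cf_sum_al (by omega),
        aD_zero (j := 1) (k := 0) (by omega) (by omega),
        aD_zero (j := n - 1) (k := 0) (by omega) (by omega),
        aD_zero (j := n) (k := 0) (by omega) (by omega),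
        sum_aD_single (Finset.mem_Icc.mpr ⟨le_refl 2, by omega⟩)
          (fun t h1 h2 hne => aD_zero (by omega) (by omega)),
        aD_neg1 (j := 2) (k := 0) (by omega) (by omega)]
      norm_num
    · module

end
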